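/- Let n be a positive integer and let p < q be primes with gcd(p, n) = 1. Then φ̃(np) ≤ φ̃(nq). -/
import Mathlib


/-- φ̃(n): number of m with 1 ≤ m ≤ n, gcd(m,n)=1, m not prime. -/
def phiT (n : ℕ) : ℕ :=
  ((Finset.Icc 1 n).filter (fun m => Nat.gcd m n = 1 ∧ ¬ m.Prime)).card

/-- The product of the first k primes. -/
noncomputable def primorialN (k : ℕ) : ℕ := ∏ i ∈ Finset.range k, Nat.nth Nat.Prime i

open Finset

private lemma block_card (n t : ℕ) : ∀ k : ℕ,
    ((Finset.Ico t (t + n * k)).filter n.Coprime).card = n.totient * k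
  | 0 => by simp
  | k + 1 => by
    have hmid : t + n * k ≤ t + n * (k + 1) := by
      have : n * k ≤ n * (k + 1) := Nat.mul_le_mul_left n (by omega)
      omega
    have hsplit : Finset.Ico t (t + n * (k + 1)) =
        Finset.Ico t (t + n * k) ∪ Finset.Ico (t + n * k) (t + n * (k + 1)) :=
      (Finset.Ico_union_Ico_eq_Ico (by omega) hmid).symm
    have hdisj : Disjoint ((Finset.Ico t (t + n * k)).filter n.Coprime)
        ((Finset.Ico (t + n * k) (t + n * (k + 1))).filter n.Coprime) :=
      Disjoint.mono (Finset.filter_subset _ _) (Finset.filter_subset _ _)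
        (Finset.Ico_disjoint_Ico_consecutive t (t + n * k) (t + n * (k + 1)))
    have h2 : ((Finset.Ico (t + n * k) (t + n * (k + 1))).filter n.Coprime).card
        = n.totient := by
      have he : t + n * (k + 1) = (t + n * k) + n := by ring
      rw [he]
      exact Nat.filter_coprime_Ico_eq_totient n (t + n * k)
    rw [hsplit, Finset.filter_union, Finset.card_union_of_disjoint hdisj,
      block_card n t k, h2, Nat.mul_succ]

private lemma coprime_Icc_card (N : ℕ) :
    ((Finset.Icc 1 N).filter (fun m => Nat.gcd m N = 1)).card = N.totient := by
  have h := Nat.filter_coprime_Ico_eq_totient N 1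
  rw [← h]
  congr 1
  ext m
  simp only [Finset.mem_filter, Finset.mem_Icc, Finset.mem_Ico]
  rw [Nat.Coprime, Nat.gcd_comm N m]
  constructor <;> rintro ⟨⟨h1, h2⟩, h3⟩ <;> exact ⟨⟨by omega, by omega⟩, h3⟩

private lemma phiT_partition (N : ℕ) :
    phiT N + ((Finset.Icc 1 N).filter (fun m => Nat.gcd m N = 1 ∧ m.Prime)).card
      = N.totient := by
  classical
  have h := Finset.card_filter_add_card_filter_not
    (s := (Finset.Icc 1 N).filter (fun m => Nat.gcd m N = 1))
    (p := fun m => m.Prime)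
  rw [Finset.filter_filter, Finset.filter_filter] at h
  rw [coprime_Icc_card] at h
  rw [phiT]
  omega

theorem stmt4 (n p q : ℕ) (hn : 0 < n) (hp : p.Prime) (hq : q.Prime)
    (hpq : p < q) (hcop : Nat.gcd p n = 1) : phiT (n * p) ≤ phiT (n * q) := by
  classical
  set N := n * p with hN
  set M := n * q with hM
  set a := n.totient with ha
  have hapos : 0 < a := Nat.totient_pos.mpr hn
  have hnp : Nat.Coprime n p := (Nat.coprime_comm.mp hcop)
  have hNM : N ≤ M := Nat.mul_le_mul_left n hpq.le
  have hnN : n ≤ N := Nat.le_mul_of_pos_right n hp.pos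
  have hndvdM : n ∣ M := ⟨q, rfl⟩
  have hqdvdM : q ∣ M := ⟨n, (mul_comm n q)⟩
  -- totient of N
  have hφN : N.totient = a * (p - 1) := by
    rw [hN, Nat.totient_mul hnp, Nat.totient_prime hp]
  -- prime-count sets
  have hpartN := phiT_partition N
  have hpartM := phiT_partition M
  set PN := (Finset.Icc 1 N).filter (fun m => Nat.gcd m N = 1 ∧ m.Prime) with hPN
  -- split the prime count for M
  set g : ℕ → Prop := fun m => Nat.gcd m M = 1 ∧ m.Prime with hg
  have hsplit : Finset.Icc 1 M = Finset.Icc 1 N ∪ Finset.Ico (N + 1) (M + 1) := by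
    ext m
    simp only [Finset.mem_union, Finset.mem_Icc, Finset.mem_Ico]
    omega
  have hdisj : Disjoint ((Finset.Icc 1 N).filter g)
      ((Finset.Ico (N + 1) (M + 1)).filter g) := by
    apply Disjoint.mono (Finset.filter_subset _ _) (Finset.filter_subset _ _)
    rw [Finset.disjoint_left]
    intro m hm hm'
    simp only [Finset.mem_Icc] at hm
    simp only [Finset.mem_Ico] at hm'
    omega
  have hcardsplit : ((Finset.Icc 1 M).filter g).card
      = ((Finset.Icc 1 N).filter g).card
        + ((Finset.Ico (N + 1) (M + 1)).filter g).card := by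
    rw [hsplit, Finset.filter_union, Finset.card_union_of_disjoint hdisj]
  set Pm1 := ((Finset.Icc 1 N).filter g).card with hPm1
  set Pm2 := ((Finset.Ico (N + 1) (M + 1)).filter g).card with hPm2
  -- the coprime-to-n block set
  set T := (Finset.Ico (N + 1) (N + 1 + n * (q - p))).filter n.Coprime with hT
  have hMe : N + 1 + n * (q - p) = M + 1 := by
    have : n * p + n * (q - p) = n * q := by
      rw [← Nat.mul_add]
      congr 1
      omega
    omega
  have hTcard : T.card = a * (q - p) := block_card n (N + 1) (q - p)
  have hT' : T = (Finset.Ico (N + 1) (M + 1)).filter n.Coprime := by rw [hT, hMe]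
  -- Pm2 set is inside T
  have hPm2T : (Finset.Ico (N + 1) (M + 1)).filter g ⊆ T := by
    rw [hT']
    intro m hm
    simp only [Finset.mem_filter, hg] at hm ⊢
    refine ⟨hm.1, ?_⟩
    have hmM : Nat.Coprime m M := hm.2.1
    exact (hmM.coprime_dvd_right hndvdM).symm
  -- elements of the low part
  have hlow : ∀ r ∈ (Finset.Icc 1 N).filter g, r = p ∨ (r ∈ PN ∧ r ≠ q) := by
    intro r hr
    simp only [Finset.mem_filter, Finset.mem_Icc, hg] at hr
    obtain ⟨⟨h1, h2⟩, hgcd, hpr⟩ := hr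
    have hrq : r ≠ q := by
      intro h
      rw [h] at hgcd
      have hd : q ∣ Nat.gcd q M := Nat.dvd_gcd dvd_rfl hqdvdM
      rw [hgcd] at hd
      exact hq.ne_one (Nat.dvd_one.mp hd)
    by_cases hrN : r ∣ N
    · left
      rcases (Nat.Prime.dvd_mul hpr).mp hrN with hrn | hrp
      · exfalso
        have : r ∣ Nat.gcd r M := Nat.dvd_gcd dvd_rfl (hrn.trans hndvdM)
        rw [hgcd] at this
        exact hpr.ne_one (Nat.dvd_one.mp this)
      · exact (Nat.prime_dvd_prime_iff_eq hpr hp).mp hrp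
    · right
      refine ⟨?_, hrq⟩
      simp only [hPN, Finset.mem_filter, Finset.mem_Icc]
      exact ⟨⟨h1, h2⟩, (hpr.coprime_iff_not_dvd).mpr hrN, hpr⟩
  have hlow_sub : (Finset.Icc 1 N).filter g ⊆ insert p (PN.erase q) := by
    intro r hr
    rcases hlow r hr with h | ⟨h1, h2⟩
    · simp [h]
    · exact Finset.mem_insert_of_mem (Finset.mem_erase.mpr ⟨h2, h1⟩)
  have hPm1_bound : Pm1 ≤ (PN.erase q).card + 1 :=
    le_trans (Finset.card_le_card hlow_sub) (Finset.card_insert_le _ _)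
  -- abstract products
  have hφM_cases : (q ∣ n ∧ M.totient = a * (p - 1) + a * (q - p) + a)
      ∨ (¬ q ∣ n ∧ M.totient = a * (p - 1) + a * (q - p)) := by
    by_cases hqn : q ∣ n
    · left
      refine ⟨hqn, ?_⟩
      have h1 : M.totient = q * a := by
        rw [hM, mul_comm n q, Nat.totient_mul_of_prime_of_dvd hq hqn]
      have hqe : (p - 1) + (q - p) + 1 = q := by have := hp.two_le; omega
      calc M.totient = q * a := h1
        _ = a * ((p - 1) + (q - p) + 1) := by rw [hqe, mul_comm]
        _ = a * (p - 1) + a * (q - p) + a := by ring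
    · right
      refine ⟨hqn, ?_⟩
      have hnq : Nat.Coprime n q := ((hq.coprime_iff_not_dvd).mpr hqn).symm
      have h1 : M.totient = a * (q - 1) := by
        rw [hM, Nat.totient_mul hnq, Nat.totient_prime hq]
      have hqe : (p - 1) + (q - p) = q - 1 := by have := hp.two_le; omega
      rw [h1, ← hqe, Nat.mul_add]
  rcases hφM_cases with ⟨hqn, hφM⟩ | ⟨hqn, hφM⟩
  · -- q ∣ n : extra slack a ≥ 1
    have hPm1' : Pm1 ≤ PN.card + 1 :=
      le_trans hPm1_bound (by have := Finset.card_erase_le (s := PN) (a := q); omega)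
    have hPm2' : Pm2 ≤ a * (q - p) := by
      have := Finset.card_le_card hPm2T
      omega
    rw [hφN] at hpartN
    rw [hφM] at hpartM
    rw [hcardsplit] at hpartM
    set X := a * (p - 1) with hX
    set Y := a * (q - p) with hY
    clear_value X Y
    omega
  · -- q ∤ n
    by_cases hqN : q ≤ N
    · -- q is in PN, compensating the +1
      have hqPN : q ∈ PN := by
        simp only [hPN, Finset.mem_filter, Finset.mem_Icc]
        refine ⟨⟨hq.one_lt.le, hqN⟩, ?_, hq⟩
        have hqdN : ¬ q ∣ N := by
          intro hd
          rcases (Nat.Prime.dvd_mul hq).mp hd with h | h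
          · exact hqn h
          · exact absurd ((Nat.prime_dvd_prime_iff_eq hq hp).mp h) (by omega)
        exact (hq.coprime_iff_not_dvd).mpr hqdN
      have herase : (PN.erase q).card = PN.card - 1 := Finset.card_erase_of_mem hqPN
      have hPNpos : 1 ≤ PN.card := Finset.card_pos.mpr ⟨q, hqPN⟩
      have hPm2' : Pm2 ≤ a * (q - p) := by
        have := Finset.card_le_card hPm2T
        omega
      rw [hφN] at hpartN
      rw [hφM] at hpartM
      rw [hcardsplit] at hpartM
      set X := a * (p - 1) with hX
      set Y := a * (q - p) with hY
      clear_value X Y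
      omega
    · -- q > N : q is in T but not in Pm2's set
      push_neg at hqN
      have hqT : q ∈ T := by
        rw [hT']
        simp only [Finset.mem_filter, Finset.mem_Ico]
        refine ⟨⟨by omega, ?_⟩, ?_⟩
        · have : q ≤ n * q := Nat.le_mul_of_pos_left q hn
          omega
        · exact ((hq.coprime_iff_not_dvd).mpr hqn).symm
      have hsubT : (Finset.Ico (N + 1) (M + 1)).filter g ⊆ T.erase q := by
        intro m hm
        refine Finset.mem_erase.mpr ⟨?_, hPm2T hm⟩
        simp only [Finset.mem_filter, hg] at hm
        intro h
        rw [h] at hm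
        have hd : q ∣ Nat.gcd q M := Nat.dvd_gcd dvd_rfl hqdvdM
        rw [hm.2.1] at hd
        exact hq.ne_one (Nat.dvd_one.mp hd)
      have hPm2' : Pm2 ≤ a * (q - p) - 1 := by
        have h1 := Finset.card_le_card hsubT
        have h2 : (T.erase q).card = T.card - 1 := Finset.card_erase_of_mem hqT
        omega
      have hTpos : 1 ≤ a * (q - p) := by
        have : 1 ≤ T.card := Finset.card_pos.mpr ⟨q, hqT⟩
        omega
      have hPm1' : Pm1 ≤ PN.card + 1 :=
        le_trans hPm1_bound (by have := Finset.card_erase_le (s := PN) (a := q); omega)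
      rw [hφN] at hpartN
      rw [hφM] at hpartM
      rw [hcardsplit] at hpartM
      set X := a * (p - 1) with hX
      set Y := a * (q - p) with hY
      clear_value X Y
      omega
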